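/- Let R be a Noetherian local ring of prime characteristic p and dimension d, and let x_1,...,x_d, y_1,...,y_d be sequences with y_i = Σ_j a_ij x_j for a matrix A. If z lies in the tight closure (x_1,...,x_d)^*, then (det A)·z lies in (y_1,...,y_d)^*. Hence multiplication by det A induces a well-defined map R/(x)^* → R/(y)^*. -/
import Mathlib


/-- The `q`-th Frobenius power `I^{[q]}` of an ideal: the ideal generated by
`q`-th powers of elements of `I`. -/
def frobPow {R : Type*} [CommRing R] (I : Ideal R) (q : ℕ) : Ideal R :=
  Ideal.span ((fun a => a ^ q) '' (I : Set R))

/-- Tight closure membership: `z ∈ I^*` iff there is `c` outside every minimal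
prime of `R` with `c z^q ∈ I^{[q]}` for all large `q = p^e`. -/
def memTightClosure {R : Type*} [CommRing R] (p : ℕ) (I : Ideal R) (z : R) : Prop :=
  ∃ c : R, (∀ P ∈ minimalPrimes R, c ∉ P) ∧
    ∃ N : ℕ, ∀ e : ℕ, N ≤ e → c * z ^ p ^ e ∈ frobPow I (p ^ e)

/-- in a Noetherian local ring of prime characteristic `p`, if
`y_i = Σ_j A i j x_j` and `z ∈ (x)^*`, then `det A · z ∈ (y)^*`; hence
multiplication by `det A` induces a well-defined map `R/(x)^* → R/(y)^*`. -/
theorem stmt4 {R : Type*} [CommRing R] [IsNoetherianRing R] [IsLocalRing R]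
    {p : ℕ} (hp : p.Prime) [CharP R p] {d : ℕ} (hdim : ringKrullDim R = d)
    (x y : Fin d → R) (A : Matrix (Fin d) (Fin d) R)
    (hA : ∀ i, y i = ∑ j, A i j * x j)
    (z : R) (hz : memTightClosure p (Ideal.span (Set.range x)) z) :
    memTightClosure p (Ideal.span (Set.range y)) (A.det * z) := by
  haveI : ExpChar R p := .prime hp
  obtain ⟨c, hc, N, hN⟩ := hz
  refine ⟨c, hc, N, fun e he => ?_⟩
  set q := p ^ e with hq
  set f := iterateFrobenius R p e with hf
  have hfdef : ∀ a : R, f a = a ^ q := fun a => iterateFrobenius_def p e a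
  -- Step 1: c * z^q lies in the span of the x_j^q.
  have h1 : c * z ^ q ∈ Ideal.span (Set.range fun j => x j ^ q) := by
    have hmem := hN e he
    refine Ideal.span_le.mpr ?_ hmem
    rintro _ ⟨a, ha, rfl⟩
    obtain ⟨co, hco⟩ := (Submodule.mem_span_range_iff_exists_fun R).mp ha
    have : a ^ q = ∑ j, co j ^ q * x j ^ q := by
      rw [← hfdef a, ← hco]
      rw [map_sum]
      refine Finset.sum_congr rfl fun j _ => ?_
      rw [smul_eq_mul, map_mul, hfdef, hfdef]
    show a ^ q ∈ _
    rw [this]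
    exact Ideal.sum_mem _ fun j _ =>
      Ideal.mul_mem_left _ _ (Ideal.subset_span ⟨j, rfl⟩)
  -- Step 2: the Frobenius-twisted matrix.
  set B := f.mapMatrix A with hB
  have hdet : B.det = A.det ^ q := by rw [← RingHom.map_det, hfdef]
  have hBx : B.mulVec (fun j => x j ^ q) = fun i => y i ^ q := by
    funext i
    simp only [Matrix.mulVec, dotProduct, hB, RingHom.mapMatrix_apply,
      Matrix.map_apply]
    rw [← hfdef (y i), hA i, map_sum]
    refine Finset.sum_congr rfl fun j _ => ?_
    rw [map_mul, hfdef, hfdef]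
  have hcram : B.adjugate.mulVec (fun i => y i ^ q)
      = A.det ^ q • fun j => x j ^ q := by
    rw [← hBx, Matrix.mulVec_mulVec, Matrix.adjugate_mul, hdet,
      Matrix.smul_mulVec, Matrix.one_mulVec]
  have h2 : ∀ j, A.det ^ q * x j ^ q ∈ frobPow (Ideal.span (Set.range y)) q := by
    intro j
    have hj : A.det ^ q * x j ^ q = ∑ i, B.adjugate j i * y i ^ q := by
      have := congrFun hcram j
      simp only [Matrix.mulVec, dotProduct, Pi.smul_apply, smul_eq_mul] at this
      rw [← this]
    rw [hj]
    refine Ideal.sum_mem _ fun i _ => Ideal.mul_mem_left _ _ ?_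
    exact Ideal.subset_span ⟨y i, Ideal.subset_span ⟨i, rfl⟩, rfl⟩
  -- Conclude.
  have key : ∀ w ∈ Ideal.span (Set.range fun j => x j ^ q),
      A.det ^ q * w ∈ frobPow (Ideal.span (Set.range y)) q := by
    intro w hw
    induction hw using Submodule.span_induction with
    | mem w hw => obtain ⟨j, rfl⟩ := hw; exact h2 j
    | zero => simp
    | add a b _ _ ha hb => rw [mul_add]; exact add_mem ha hb
    | smul r a _ ha =>
        rw [smul_eq_mul, mul_left_comm]; exact Ideal.mul_mem_left _ _ ha
  have : c * (A.det * z) ^ q = A.det ^ q * (c * z ^ q) := by ring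
  rw [this]
  exact key _ h1
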